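/- In the Poisson zoo model on Z^d, if the second moment m_2 = Σ_{H∈H} |H|^2·ν(H) is finite, then for any v with 0 < v < 1/((2d+1)·m_2), the expected size of the connected cluster of the origin in S^v is finite; in particular S^v almost surely does not percolate. -/

import Mathlib

open MeasureTheory ENNReal Filter

noncomputable section

abbrev Zd (d : ℕ) := Fin d → ℤ

def supNorm {d : ℕ} (x : Zd d) : ℕ := Finset.univ.sup fun i => (x i).natAbs

def IsNbr {d : ℕ} (x y : Zd d) : Prop := (∑ i, |x i - y i|) = 1

def stepVec {d : ℕ} (p : Fin d × Bool) : Zd d :=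
  fun j => if j = p.1 then (if p.2 then 1 else -1) else 0

def nbrs {d : ℕ} (y : Zd d) : Finset (Zd d) :=
  Finset.univ.image fun p : Fin d × Bool => y + stepVec p

/-- A family of measures which is a simple random walk on `ℤ^d` started at `x`. -/
structure SRW (d : ℕ) where
  P : Zd d → Measure (ℕ → Zd d)
  isProb : ∀ x, IsProbabilityMeasure (P x)
  start : ∀ x, P x {ω | ω 0 = x} = 1
  nn : ∀ x, P x {ω | ∀ t, IsNbr (ω t) (ω (t+1))} = 1
  cyl : ∀ (x : Zd d) (n : ℕ) (γ : ℕ → Zd d), γ 0 = x →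
      (∀ t < n, IsNbr (γ t) (γ (t+1))) →
      P x {ω | ∀ t ≤ n, ω t = γ t} = (((2 * d : ℕ) : ℝ≥0∞))⁻¹ ^ n

def HitBy {d : ℕ} (K : Set (Zd d)) (ℓ : ℕ) : Set (ℕ → Zd d) := {ω | ∃ t ≤ ℓ, ω t ∈ K}

def Hits {d : ℕ} (K : Set (Zd d)) : Set (ℕ → Zd d) := {ω | ∃ t, ω t ∈ K}

def nPaths (d : ℕ) : ℕ → Zd d → Zd d → ℕ
  | 0, x, y => if x = y then 1 else 0
  | t+1, x, y => ∑ z ∈ nbrs y, nPaths d t x z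

def pKer (d t : ℕ) (x y : Zd d) : ℝ≥0∞ := (nPaths d t x y : ℝ≥0∞) / ((2*d : ℕ) : ℝ≥0∞)^t

def green (d : ℕ) (x y : Zd d) : ℝ≥0∞ := ∑' t, pKer d t x y

def nAvoid {d : ℕ} (K : Finset (Zd d)) : ℕ → Zd d → ℕ
  | 0, _ => 1
  | t+1, x => ∑ z ∈ (nbrs x).filter (fun z => z ∉ K), nAvoid K t z

def escProb {d : ℕ} (K : Finset (Zd d)) (x : Zd d) : ℝ≥0∞ :=
  ⨅ n, (nAvoid K n x : ℝ≥0∞) / ((2*d : ℕ) : ℝ≥0∞)^n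

def cap {d : ℕ} (K : Finset (Zd d)) : ℝ≥0∞ := ∑ x ∈ K, escProb K x

def ConnIn {d : ℕ} (S : Set (Zd d)) (x y : Zd d) : Prop :=
  ∃ (n : ℕ) (γ : ℕ → Zd d), γ 0 = x ∧ γ n = y ∧ (∀ t < n, IsNbr (γ t) (γ (t+1))) ∧ ∀ t ≤ n, γ t ∈ S

def PercSet {d : ℕ} (S : Set (Zd d)) : Prop := ∃ x ∈ S, {y | ConnIn S x y}.Infinite

def IsAnimal {d : ℕ} (H : Finset (Zd d)) : Prop :=
  (0 : Zd d) ∈ H ∧ ∀ x ∈ H, ∀ y ∈ H, ConnIn (H : Set (Zd d)) x y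

abbrev Animal (d : ℕ) := {H : Finset (Zd d) // IsAnimal H}

def zooTrace {d : ℕ} {Ω : Type*} (N : Zd d × Animal d → Ω → ℕ) (ω : Ω) : Set (Zd d) :=
  {z | ∃ p : Zd d × Animal d, 1 ≤ N p ω ∧ z - p.1 ∈ p.2.1}

def poissonProb (lam : ℝ) (k : ℕ) : ℝ≥0∞ :=
  ENNReal.ofReal (Real.exp (-lam) * lam ^ k / (Nat.factorial k))

def cluster {d : ℕ} (S : Set (Zd d)) (x : Zd d) : Set (Zd d) := {y | x ∈ S ∧ ConnIn S x y}

def closF {d : ℕ} (H : Finset (Zd d)) : Finset (Zd d) := H ∪ H.biUnion nbrs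


abbrev Worm (d : ℕ) := Σ n : ℕ, (Zd d × (Fin n → Fin d × Bool))

def wormLen {d : ℕ} (w : Worm d) : ℕ := w.1 + 1

def IsBernoulliSite {d : ℕ} (P : Measure (Zd d → Bool)) (p : ℝ≥0∞) : Prop :=
  ∀ A B : Finset (Zd d), Disjoint A B →
    P {η | (∀ a ∈ A, η a = true) ∧ ∀ b ∈ B, η b = false} = p ^ A.card * (1 - p) ^ B.card

/-- The critical probability of Bernoulli site percolation on `ℤ^d`. -/
def pcSite (d : ℕ) : ℝ≥0∞ :=
  sInf {p | ∀ P : Measure (Zd d → Bool), IsProbabilityMeasure P → IsBernoulliSite P p →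
    P {η | PercSet {x | η x = true}} = 1}

open Classical in
/-- The Grimmett–Marstrand exploration process: given an ordering `emb` of the (directed)
nearest-neighbour edges and outcomes `b t`, produce the pair (good set, bad set) at step `t`. -/
def explore {d : ℕ} (emb : (Zd d × Zd d) ↪ ℕ) (b : ℕ → Bool) : ℕ → Finset (Zd d) × Finset (Zd d)
  | 0 => if b 0 then ({0}, ∅) else (∅, {0})
  | t+1 =>
    let G := (explore emb b t).1
    let B := (explore emb b t).2
    let cand : Finset (Zd d × Zd d) :=
      G.biUnion fun u => ((nbrs u).filter fun w => w ∉ G ∧ w ∉ B).image fun w => (u, w)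
    if h : cand.Nonempty then
      let e := (Finset.exists_min_image cand (fun p => emb p) h).choose
      if b (t+1) then (insert e.2 G, B) else (G, insert e.2 B)
    else (G, B)

/-- Mutual Dirichlet energy of two measures on `ℤ^d` w.r.t. the random-walk Green function. -/
def energy (d : ℕ) (μ₁ μ₂ : Zd d → ℝ≥0∞) : ℝ≥0∞ :=
  ∑' x, ∑' y, green d x y * μ₁ x * μ₂ y
open MeasureTheory ENNReal Filter

namespace PZ

variable {d : ℕ}

abbrev ZooIdx (d : ℕ) := Zd d × Animal d

/-- Neighbor decomposition. -/
lemma isNbr_step {x y : Zd d} (h : IsNbr x y) : ∃ p : Fin d × Bool, y = x + stepVec p := by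
  classical
  unfold IsNbr at h
  have hnn : ∀ j, 0 ≤ |x j - y j| := fun j => abs_nonneg _
  have hex : ∃ i, x i ≠ y i := by
    by_contra hc
    push_neg at hc
    have : (∑ i, |x i - y i|) = 0 := by
      apply Finset.sum_eq_zero
      intro i _
      simp [hc i]
    omega
  obtain ⟨i, hi⟩ := hex
  have hxi : 1 ≤ |x i - y i| := by
    have hne : x i - y i ≠ 0 := sub_ne_zero.mpr hi
    exact Int.one_le_abs hne
  have hrest : ∀ j, j ≠ i → x j = y j := by
    intro j hj
    by_contra hc
    have hxj : 1 ≤ |x j - y j| := by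
      exact Int.one_le_abs (sub_ne_zero.mpr hc)
    have e1 := Finset.add_sum_erase Finset.univ (fun k => |x k - y k|) (Finset.mem_univ i)
    have hmem : j ∈ Finset.univ.erase i := Finset.mem_erase.mpr ⟨hj, Finset.mem_univ j⟩
    have e2 := Finset.single_le_sum (f := fun k => |x k - y k|) (fun k _ => hnn k) hmem
    omega
  have hsum : ∑ k, |x k - y k| = |x i - y i| := by
    rw [← Finset.add_sum_erase Finset.univ _ (Finset.mem_univ i)]
    have : ∑ k ∈ Finset.univ.erase i, |x k - y k| = 0 := by
      apply Finset.sum_eq_zero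
      intro j hj
      rw [hrest j (Finset.mem_erase.mp hj).1]; simp
    omega
  rw [hsum] at h
  have : x i - y i = 1 ∨ x i - y i = -1 := by
    rcases (abs_eq (by norm_num : (0:ℤ) ≤ 1)).mp h with h1 | h1
    · exact Or.inl h1
    · exact Or.inr h1
  rcases this with h1 | h1
  · refine ⟨(i, false), ?_⟩
    funext j
    by_cases hji : j = i
    · subst hji; simp [stepVec]; omega
    · simp [stepVec, hji, hrest j hji]
  · refine ⟨(i, true), ?_⟩
    funext j
    by_cases hji : j = i
    · subst hji; simp [stepVec]; omega
    · simp [stepVec, hji, hrest j hji]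

lemma mem_nbrs_of_isNbr {x y : Zd d} (h : IsNbr x y) : y ∈ nbrs x := by
  obtain ⟨p, hp⟩ := isNbr_step h
  exact Finset.mem_image.mpr ⟨p, Finset.mem_univ p, hp.symm⟩

lemma mem_closF_of_isNbr {H : Finset (Zd d)} {a b : Zd d} (ha : a ∈ H) (h : IsNbr a b) :
    b ∈ closF H := by
  have : b ∈ H.biUnion nbrs := Finset.mem_biUnion.mpr ⟨a, ha, mem_nbrs_of_isNbr h⟩
  exact Finset.mem_union_right _ this

lemma card_closF_le (H : Finset (Zd d)) : (closF H).card ≤ (2 * d + 1) * H.card := by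
  classical
  have h1 : (closF H).card ≤ H.card + (H.biUnion nbrs).card := Finset.card_union_le _ _
  have h2 : (H.biUnion nbrs).card ≤ ∑ y ∈ H, (nbrs y).card := Finset.card_biUnion_le
  have h3 : ∀ y : Zd d, (nbrs y).card ≤ 2 * d := by
    intro y
    have := Finset.card_image_le (s := (Finset.univ : Finset (Fin d × Bool)))
      (f := fun p => y + stepVec p)
    simpa [nbrs, Finset.card_univ, Nat.mul_comm] using this
  have h4 : ∑ y ∈ H, (nbrs y).card ≤ ∑ _y ∈ H, 2 * d :=
    Finset.sum_le_sum fun y _ => h3 y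
  have h5 : ∑ _y ∈ H, 2 * d = H.card * (2 * d) := by simp [Finset.sum_const, Nat.smul_one_eq_cast]
  nlinarith [h1, h2, h4]

end PZ
namespace PZ

variable {d : ℕ}

def Link (p q : ZooIdx d) : Prop :=
  ∃ w : Zd d, w - p.1 ∈ closF p.2.1 ∧ w - q.1 ∈ q.2.1

/-- ℕ-indexed chain of animals starting at `y`. -/
def ChainOK (y : Zd d) (k : ℕ) (c : ℕ → ZooIdx d) : Prop :=
  (y - (c 0).1 ∈ (c 0).2.1) ∧ ∀ t < k, Link (c t) (c (t+1))

/-- Fin-indexed chain. -/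
def FChainOK (y : Zd d) {k : ℕ} (c : Fin (k+1) → ZooIdx d) : Prop :=
  (y - (c 0).1 ∈ (c 0).2.1) ∧ ∀ i : Fin k, Link (c i.castSucc) (c i.succ)

/-- From a point of the cluster, extract a chain of present animals. -/
lemma chain_exists {Ω : Type*} (N : ZooIdx d → Ω → ℕ) (ω : Ω) (y z : Zd d)
    (hz : z ∈ cluster (zooTrace N ω) y) :
    ∃ (k : ℕ) (c : ℕ → ZooIdx d), ChainOK y k c ∧ (∀ t ≤ k, 1 ≤ N (c t) ω) ∧
      z - (c k).1 ∈ (c k).2.1 := by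
  obtain ⟨hyS, n, γ, h0, hn, hnb, hmem⟩ := hz
  have hcov : ∀ t : ℕ, ∃ p : ZooIdx d, 1 ≤ N p ω ∧ γ (min t n) - p.1 ∈ p.2.1 := by
    intro t
    have : γ (min t n) ∈ zooTrace N ω := hmem (min t n) (min_le_right t n)
    exact this
  choose c hc1 hc2 using hcov
  refine ⟨n, c, ⟨?_, ?_⟩, fun t _ => hc1 t, ?_⟩
  · have := hc2 0
    rwa [Nat.min_eq_left (Nat.zero_le n), h0] at this
  · intro t ht
    have htn : min t n = t := Nat.min_eq_left ht.le
    have ht1 : min (t+1) n = t + 1 := Nat.min_eq_left ht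
    refine ⟨γ (t+1), ?_, ?_⟩
    · have hmemt : γ t - (c t).1 ∈ (c t).2.1 := by
        have := hc2 t; rwa [htn] at this
      have hnbr : IsNbr (γ t - (c t).1) (γ (t+1) - (c t).1) := by
        have h' := hnb t ht
        unfold IsNbr at h' ⊢
        simpa only [Pi.sub_apply, sub_sub_sub_cancel_right] using h'
      exact mem_closF_of_isNbr hmemt hnbr
    · have := hc2 (t+1); rwa [ht1] at this
  · have := hc2 n; rwa [Nat.min_self, hn] at this

/-- Extract an injective chain. -/
lemma chain_inj_exists {Ω : Type*} (N : ZooIdx d → Ω → ℕ) (ω : Ω) (y z : Zd d) :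
    ∀ k : ℕ, ∀ c : ℕ → ZooIdx d, ChainOK y k c → (∀ t ≤ k, 1 ≤ N (c t) ω) →
    (z - (c k).1 ∈ (c k).2.1) →
    ∃ (m : ℕ) (c' : ℕ → ZooIdx d), ChainOK y m c' ∧ (∀ t ≤ m, 1 ≤ N (c' t) ω) ∧
      (z - (c' m).1 ∈ (c' m).2.1) ∧ (∀ s ≤ m, ∀ t ≤ m, c' s = c' t → s = t) := by
  intro k
  induction k using Nat.strong_induction_on with
  | _ k IH =>
    intro c hok hpres hend
    by_cases hinj : ∀ s ≤ k, ∀ t ≤ k, c s = c t → s = t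
    · exact ⟨k, c, hok, hpres, hend, hinj⟩
    · push_neg at hinj
      obtain ⟨s, hs, t, ht, hcst, hst⟩ := hinj
      -- wlog i < j
      obtain ⟨i, j, hij, hjk, hcij⟩ : ∃ i j, i < j ∧ j ≤ k ∧ c i = c j := by
        rcases Nat.lt_or_ge s t with h | h
        · exact ⟨s, t, h, ht, hcst⟩
        · exact ⟨t, s, lt_of_le_of_ne h (Ne.symm hst), hs, hcst.symm⟩
      set e := j - i with he
      have hepos : 0 < e := by omega
      set k' := k - e with hk'
      have hk'lt : k' < k := by omega
      set c' : ℕ → ZooIdx d := fun t => if t ≤ i then c t else c (t + e) with hc'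
      have hval : ∀ t, c' t = if t ≤ i then c t else c (t + e) := fun t => rfl
      have hok' : ChainOK y k' c' := by
        constructor
        · have : c' 0 = c 0 := by rw [hval]; simp
          rw [this]; exact hok.1
        · intro t htk'
          rcases Nat.lt_or_ge t i with h1 | h1
          · have ha : c' t = c t := by rw [hval]; simp [h1.le]
            have hb : c' (t+1) = c (t+1) := by
              rw [hval]; have h1' : t + 1 ≤ i := h1; simp [h1']
            rw [ha, hb]; exact hok.2 t (by omega)
          · rcases Nat.eq_or_lt_of_le h1 with h2 | h2
            · have ha : c' t = c j := by rw [hval]; simp [← h2, hcij]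
              have hb : c' (t+1) = c (j+1) := by
                rw [hval]
                have : ¬ (t + 1 ≤ i) := by omega
                simp only [this, if_false]
                congr 1
                omega
              rw [ha, hb]; exact hok.2 j (by omega)
            · have ha : c' t = c (t + e) := by
                rw [hval]; have : ¬ (t ≤ i) := by omega
                simp [this]
              have hb : c' (t+1) = c (t + e + 1) := by
                rw [hval]; have : ¬ (t + 1 ≤ i) := by omega
                simp only [this, if_false]; congr 1; omega
              rw [ha, hb]; exact hok.2 (t + e) (by omega)
      have hpres' : ∀ t ≤ k', 1 ≤ N (c' t) ω := by
        intro t htk'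
        rw [hval]
        split
        · exact hpres t (by omega)
        · exact hpres (t + e) (by omega)
      have hend' : z - (c' k').1 ∈ (c' k').2.1 := by
        have : c' k' = c k := by
          rw [hval]
          split
          · next h =>
            have : k' = i := by omega
            rw [this, hcij]
            congr 1
            omega
          · congr 1; omega
        rw [this]; exact hend
      exact IH k' hk'lt c' hok' hpres' hend'

/-- Convert an injective ℕ-chain into an injective Fin-chain. -/
lemma chain_fin_exists {Ω : Type*} (N : ZooIdx d → Ω → ℕ) (ω : Ω) (y z : Zd d)
    (hz : z ∈ cluster (zooTrace N ω) y) :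
    ∃ (k : ℕ) (c : Fin (k+1) → ZooIdx d), FChainOK y c ∧ Function.Injective c ∧
      (∀ i, 1 ≤ N (c i) ω) ∧ z - (c (Fin.last k)).1 ∈ (c (Fin.last k)).2.1 := by
  obtain ⟨k0, c0, hok0, hpres0, hend0⟩ := chain_exists N ω y z hz
  obtain ⟨m, c, hok, hpres, hend, hinj⟩ := chain_inj_exists N ω y z k0 c0 hok0 hpres0 hend0
  refine ⟨m, fun i => c i.val, ⟨hok.1, ?_⟩, ?_, ?_, ?_⟩
  · intro i
    exact hok.2 i.val (by omega)
  · intro a b hab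
    exact Fin.ext (hinj a.val (by omega) b.val (by omega) hab)
  · intro i
    exact hpres i.val (by omega)
  · simpa using hend

end PZ
namespace PZ

variable {d : ℕ} {Ω : Type*} [MeasurableSpace Ω]

lemma single_bound (P : Measure Ω) [IsProbabilityMeasure P]
    (ν : Animal d → ℝ≥0∞) (hν : ∑' H : Animal d, ν H = 1)
    (N : ZooIdx d → Ω → ℕ) (hNmeas : ∀ p, Measurable (N p))
    (v : ℝ) (hv : 0 < v)
    (hpois : ∀ p k, P {ω | N p ω = k} = poissonProb (v * (ν p.2).toReal) k)
    (p : ZooIdx d) :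
    P {ω | 1 ≤ N p ω} ≤ ENNReal.ofReal v * ν p.2 := by
  have hνle : ν p.2 ≤ 1 := hν ▸ ENNReal.le_tsum p.2
  have hνne : ν p.2 ≠ ⊤ := (lt_of_le_of_lt hνle ENNReal.one_lt_top).ne
  set lam := v * (ν p.2).toReal with hlam
  have hlam0 : 0 ≤ lam := mul_nonneg hv.le ENNReal.toReal_nonneg
  have h0 : P {ω | N p ω = 0} = ENNReal.ofReal (Real.exp (-lam)) := by
    rw [hpois p 0]; unfold poissonProb; norm_num [hlam]
  have hset : {ω | 1 ≤ N p ω} = {ω | N p ω = 0}ᶜ := by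
    ext ω; simp [Nat.one_le_iff_ne_zero]
  have hms : MeasurableSet {ω | N p ω = 0} := by
    have h1 : {ω | N p ω = 0} = N p ⁻¹' {0} := rfl
    rw [h1]; exact (hNmeas p) (measurableSet_singleton 0)
  rw [hset, prob_compl_eq_one_sub hms, h0]
  have hexp : (1 : ℝ) - lam ≤ Real.exp (-lam) := by
    have := Real.add_one_le_exp (-lam); linarith
  have hone : (1:ℝ≥0∞) ≤ ENNReal.ofReal lam + ENNReal.ofReal (Real.exp (-lam)) := by
    calc (1:ℝ≥0∞) = ENNReal.ofReal 1 := by simp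
    _ ≤ ENNReal.ofReal (lam + Real.exp (-lam)) := ENNReal.ofReal_le_ofReal (by linarith)
    _ ≤ _ := ENNReal.ofReal_add_le
  have h2 : (1:ℝ≥0∞) - ENNReal.ofReal (Real.exp (-lam)) ≤ ENNReal.ofReal lam :=
    tsub_le_iff_right.mpr hone
  refine h2.trans (le_of_eq ?_)
  rw [hlam, ENNReal.ofReal_mul hv.le, ENNReal.ofReal_toReal hνne]

lemma prod_bound (P : Measure Ω) [IsProbabilityMeasure P]
    (ν : Animal d → ℝ≥0∞) (hν : ∑' H : Animal d, ν H = 1)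
    (N : ZooIdx d → Ω → ℕ) (hNmeas : ∀ p, Measurable (N p))
    (hindep : ProbabilityTheory.iIndepFun N P)
    (v : ℝ) (hv : 0 < v)
    (hpois : ∀ p k, P {ω | N p ω = k} = poissonProb (v * (ν p.2).toReal) k)
    {k : ℕ} (c : Fin (k+1) → ZooIdx d) (hc : Function.Injective c) :
    P {ω | ∀ i, 1 ≤ N (c i) ω} ≤ ∏ i, (ENNReal.ofReal v * ν (c i).2) := by
  classical
  have hmeq : {ω | ∀ i, 1 ≤ N (c i) ω}
      = ⋂ p ∈ Finset.image c Finset.univ, (N p) ⁻¹' (Set.Ici 1) := by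
    ext ω
    simp only [Set.mem_setOf_eq, Set.mem_iInter, Finset.mem_image, Set.mem_preimage,
      Set.mem_Ici]
    constructor
    · rintro h p ⟨i, _, rfl⟩; exact h i
    · intro h i; exact h (c i) ⟨i, Finset.mem_univ i, rfl⟩
  have hprod := hindep.measure_inter_preimage_eq_mul (Finset.image c Finset.univ)
      (sets := fun _ => Set.Ici 1) (fun i _ => MeasurableSet.of_discrete)
  rw [hmeq, hprod, Finset.prod_image (fun a _ b _ h => hc h)]
  apply Finset.prod_le_prod' (fun i _ => ?_)
  exact single_bound P ν hν N hNmeas v hv hpois (c i)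

end PZ
namespace PZ

variable {d : ℕ}

open scoped Classical in
lemma tsum_if_le {α : Type*} (B : Finset α) (p : α → Prop) [DecidablePred p] (t : ℝ≥0∞)
    (h : ∀ x, p x → x ∈ B) :
    ∑' x, (if p x then t else 0) ≤ (B.card : ℝ≥0∞) * t := by
  have hle : ∀ x : α, (if p x then t else 0) ≤ Set.indicator (↑B) (fun _ => t) x := by
    intro x
    split
    · next hp => rw [Set.indicator_of_mem (by exact_mod_cast h x hp)]
    · simp
  calc ∑' x, (if p x then t else 0) ≤ ∑' x, Set.indicator (↑B : Set α) (fun _ => t) x :=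
        ENNReal.tsum_le_tsum hle
    _ = ∑' _x : (↑B : Set α), t := (tsum_subtype (↑B : Set α) fun _ => t).symm
    _ = ∑ _x ∈ B, t := by exact Finset.tsum_subtype B fun _ => t
    _ = (B.card : ℝ≥0∞) * t := by simp [Finset.sum_const, nsmul_eq_mul]

open scoped Classical in
noncomputable def chainWt (ν : Animal d → ℝ≥0∞) (u : ℝ≥0∞) (y : Zd d) {k : ℕ}
    (c : Fin (k+1) → ZooIdx d) : ℝ≥0∞ :=
  (if FChainOK y c then 1 else 0) * (∏ i, (u * ν (c i).2)) * ((c (Fin.last k)).2.1.card : ℝ≥0∞)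

open scoped Classical in
lemma step_bound (ν : Animal d → ℝ≥0∞) (u : ℝ≥0∞) (pl : ZooIdx d) :
    ∑' q : ZooIdx d, (if Link pl q then 1 else 0) * (u * ν q.2) * (q.2.1.card : ℝ≥0∞)
      ≤ ((2*d+1 : ℕ) : ℝ≥0∞) * (∑' H : Animal d, (H.1.card : ℝ≥0∞)^2 * ν H) * u
        * (pl.2.1.card : ℝ≥0∞) := by
  have hrw : ∀ q : ZooIdx d, (if Link pl q then 1 else 0) * (u * ν q.2) * (q.2.1.card : ℝ≥0∞)
      = if Link pl q then (u * ν q.2) * (q.2.1.card : ℝ≥0∞) else 0 := by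
    intro q; split <;> simp
  simp only [hrw]
  rw [ENNReal.tsum_prod', ENNReal.tsum_comm]
  have hinner : ∀ H : Animal d,
      (∑' x : Zd d, (if Link pl (x, H) then (u * ν H) * (H.1.card : ℝ≥0∞) else 0))
      ≤ ((((2*d+1) * pl.2.1.card * H.1.card : ℕ)) : ℝ≥0∞) * ((u * ν H) * (H.1.card : ℝ≥0∞)) := by
    intro H
    refine le_trans (tsum_if_le
      (Finset.image (fun w : Zd d × Zd d => pl.1 + w.1 - w.2) ((closF pl.2.1) ×ˢ H.1))
      _ _ ?_) ?_
    · rintro x ⟨w, hw1, hw2⟩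
      refine Finset.mem_image.mpr ⟨(w - pl.1, w - x), Finset.mem_product.mpr ⟨hw1, hw2⟩, ?_⟩
      show pl.1 + (w - pl.1) - (w - x) = x
      abel
    · refine mul_le_mul_left ?_ _
      have h1 : (Finset.image (fun w : Zd d × Zd d => pl.1 + w.1 - w.2)
          ((closF pl.2.1) ×ˢ H.1)).card ≤ (2*d+1) * pl.2.1.card * H.1.card := by
        calc _ ≤ ((closF pl.2.1) ×ˢ H.1).card := Finset.card_image_le
          _ = (closF pl.2.1).card * H.1.card := Finset.card_product _ _
          _ ≤ ((2*d+1) * pl.2.1.card) * H.1.card :=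
              Nat.mul_le_mul_right _ (card_closF_le _)
      exact_mod_cast Nat.cast_le.mpr h1
  refine le_trans (ENNReal.tsum_le_tsum hinner) (le_of_eq ?_)
  have hterm : ∀ H : Animal d,
      ((((2*d+1) * pl.2.1.card * H.1.card : ℕ)) : ℝ≥0∞) * ((u * ν H) * (H.1.card : ℝ≥0∞))
      = (((2*d+1 : ℕ)) : ℝ≥0∞) * (pl.2.1.card : ℝ≥0∞) * u * ((H.1.card : ℝ≥0∞)^2 * ν H) := by
    intro H
    push_cast
    ring
  simp only [hterm]
  rw [ENNReal.tsum_mul_left]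
  ring

open scoped Classical in
lemma base_bound (ν : Animal d → ℝ≥0∞) (u : ℝ≥0∞) (y : Zd d) :
    ∑' q : ZooIdx d, (if y - q.1 ∈ q.2.1 then 1 else 0) * (u * ν q.2) * (q.2.1.card : ℝ≥0∞)
      ≤ u * (∑' H : Animal d, (H.1.card : ℝ≥0∞)^2 * ν H) := by
  have hrw : ∀ q : ZooIdx d, (if y - q.1 ∈ q.2.1 then 1 else 0) * (u * ν q.2) * (q.2.1.card : ℝ≥0∞)
      = if y - q.1 ∈ q.2.1 then (u * ν q.2) * (q.2.1.card : ℝ≥0∞) else 0 := by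
    intro q; split <;> simp
  simp only [hrw]
  rw [ENNReal.tsum_prod', ENNReal.tsum_comm]
  have hinner : ∀ H : Animal d,
      (∑' x : Zd d, (if y - x ∈ H.1 then (u * ν H) * (H.1.card : ℝ≥0∞) else 0))
      ≤ ((H.1.card : ℕ) : ℝ≥0∞) * ((u * ν H) * (H.1.card : ℝ≥0∞)) := by
    intro H
    refine le_trans (tsum_if_le (Finset.image (fun h => y - h) H.1) _ _ ?_) ?_
    · intro x hx
      refine Finset.mem_image.mpr ⟨y - x, hx, ?_⟩
      show y - (y - x) = x
      abel
    · exact mul_le_mul_left (by exact_mod_cast Nat.cast_le.mpr Finset.card_image_le) _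
  refine le_trans (ENNReal.tsum_le_tsum hinner) (le_of_eq ?_)
  have hterm : ∀ H : Animal d,
      ((H.1.card : ℕ) : ℝ≥0∞) * ((u * ν H) * (H.1.card : ℝ≥0∞))
      = u * ((H.1.card : ℝ≥0∞)^2 * ν H) := by
    intro H; ring
  simp only [hterm]
  rw [ENNReal.tsum_mul_left]

lemma fchainOK_snoc (y : Zd d) {k : ℕ} (c : Fin (k+1) → ZooIdx d) (q : ZooIdx d) :
    FChainOK y (Fin.snoc c q) ↔ FChainOK y c ∧ Link (c (Fin.last k)) q := by
  have h0 : (Fin.snoc c q : Fin (k+2) → ZooIdx d) 0 = c 0 := by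
    have he : (0 : Fin (k+2)) = Fin.castSucc (0 : Fin (k+1)) := rfl
    rw [he, Fin.snoc_castSucc]
  constructor
  · rintro ⟨hs, hl⟩
    refine ⟨⟨by rwa [h0] at hs, ?_⟩, ?_⟩
    · intro i
      have := hl i.castSucc
      rwa [Fin.snoc_castSucc, Fin.succ_castSucc, Fin.snoc_castSucc] at this
    · have := hl (Fin.last k)
      rwa [Fin.snoc_castSucc, Fin.succ_last, Fin.snoc_last] at this
  · rintro ⟨⟨hs, hl⟩, hlink⟩
    refine ⟨by rwa [h0], ?_⟩
    intro i
    induction i using Fin.lastCases with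
    | last =>
      rw [Fin.snoc_castSucc, Fin.succ_last, Fin.snoc_last]
      exact hlink
    | cast j =>
      rw [Fin.succ_castSucc, Fin.snoc_castSucc, Fin.snoc_castSucc]
      exact hl j

end PZ
namespace PZ

variable {d : ℕ}

open scoped Classical in
lemma chain_sum_bound (ν : Animal d → ℝ≥0∞) (u M : ℝ≥0∞)
    (hM : (∑' H : Animal d, (H.1.card : ℝ≥0∞)^2 * ν H) = M) (y : Zd d) :
    ∀ k : ℕ, (∑' c : Fin (k+1) → ZooIdx d, chainWt ν u y c)
      ≤ (u * M) * ((((2*d+1 : ℕ)) : ℝ≥0∞) * M * u)^k := by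
  intro k
  induction k with
  | zero =>
    rw [pow_zero, mul_one]
    have hiff : ∀ q : ZooIdx d, FChainOK y (fun _ : Fin 1 => q) ↔ y - q.1 ∈ q.2.1 :=
      fun q => ⟨fun h => h.1, fun h => ⟨h, fun i => i.elim0⟩⟩
    have hterm : ∀ q : ZooIdx d, chainWt ν u y (fun _ : Fin 1 => q)
        = (if y - q.1 ∈ q.2.1 then 1 else 0) * (u * ν q.2) * (q.2.1.card : ℝ≥0∞) := by
      intro q
      unfold chainWt
      rw [Fin.prod_univ_one]
      congr 1
      congr 1
      exact if_congr (hiff q) rfl rfl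
    calc (∑' c : Fin 1 → ZooIdx d, chainWt ν u y c)
        = ∑' q : ZooIdx d, chainWt ν u y ((Equiv.funUnique (Fin 1) (ZooIdx d)).symm q) :=
          (Equiv.tsum_eq (Equiv.funUnique (Fin 1) (ZooIdx d)).symm _).symm
      _ = ∑' q : ZooIdx d, (if y - q.1 ∈ q.2.1 then 1 else 0) * (u * ν q.2) * (q.2.1.card : ℝ≥0∞) :=
          tsum_congr fun q => hterm q
      _ ≤ u * (∑' H : Animal d, (H.1.card : ℝ≥0∞)^2 * ν H) := base_bound ν u y
      _ = u * M := by rw [hM]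
  | succ k IH =>
    set lam : ℝ≥0∞ := (((2*d+1 : ℕ)) : ℝ≥0∞) * M * u with hlam
    have hprod : ∀ (c : Fin (k+1) → ZooIdx d) (q : ZooIdx d),
        (∏ i : Fin (k+2), u * ν ((Fin.snoc c q : Fin (k+2) → ZooIdx d) i).2)
          = (∏ i : Fin (k+1), u * ν (c i).2) * (u * ν q.2) := by
      intro c q
      rw [Fin.prod_univ_castSucc]
      simp [Fin.snoc_castSucc, Fin.snoc_last]
    have hterm : ∀ (c : Fin (k+1) → ZooIdx d) (q : ZooIdx d),
        chainWt ν u y (Fin.snoc c q)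
          = ((if FChainOK y c then 1 else 0) * ∏ i, (u * ν (c i).2))
            * ((if Link (c (Fin.last k)) q then 1 else 0) * (u * ν q.2) * (q.2.1.card : ℝ≥0∞)) := by
      intro c q
      unfold chainWt
      rw [hprod c q, Fin.snoc_last]
      by_cases h1 : FChainOK y c
      · by_cases h2 : Link (c (Fin.last k)) q
        · rw [if_pos ((fchainOK_snoc y c q).mpr ⟨h1, h2⟩), if_pos h1, if_pos h2]; ring
        · rw [if_neg (fun hc => h2 ((fchainOK_snoc y c q).mp hc).2), if_neg h2]; ring
      · rw [if_neg (fun hc => h1 ((fchainOK_snoc y c q).mp hc).1), if_neg h1]; ring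
    have hstep : ∀ c : Fin (k+1) → ZooIdx d,
        (∑' q : ZooIdx d, (if Link (c (Fin.last k)) q then 1 else 0) * (u * ν q.2)
          * (q.2.1.card : ℝ≥0∞)) ≤ lam * ((c (Fin.last k)).2.1.card : ℝ≥0∞) := by
      intro c
      have := step_bound ν u (c (Fin.last k))
      rw [hM] at this
      exact this
    calc (∑' c : Fin (k+2) → ZooIdx d, chainWt ν u y c)
        = ∑' p : ZooIdx d × (Fin (k+1) → ZooIdx d), chainWt ν u y (Fin.snoc p.2 p.1) :=
          (Equiv.tsum_eq (Fin.snocEquiv (fun _ : Fin (k+2) => ZooIdx d)) _).symm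
      _ = ∑' q : ZooIdx d, ∑' c : Fin (k+1) → ZooIdx d, chainWt ν u y (Fin.snoc c q) :=
          ENNReal.tsum_prod'
      _ = ∑' c : Fin (k+1) → ZooIdx d, ∑' q : ZooIdx d, chainWt ν u y (Fin.snoc c q) :=
          ENNReal.tsum_comm
      _ = ∑' c : Fin (k+1) → ZooIdx d, ((if FChainOK y c then 1 else 0) * ∏ i, (u * ν (c i).2))
            * ∑' q : ZooIdx d, ((if Link (c (Fin.last k)) q then 1 else 0) * (u * ν q.2)
              * (q.2.1.card : ℝ≥0∞)) := by
          refine tsum_congr fun c => ?_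
          rw [← ENNReal.tsum_mul_left]
          exact tsum_congr fun q => hterm c q
      _ ≤ ∑' c : Fin (k+1) → ZooIdx d, ((if FChainOK y c then 1 else 0) * ∏ i, (u * ν (c i).2))
            * (lam * ((c (Fin.last k)).2.1.card : ℝ≥0∞)) :=
          ENNReal.tsum_le_tsum fun c => mul_le_mul_right (hstep c) _
      _ = ∑' c : Fin (k+1) → ZooIdx d, lam * chainWt ν u y c := by
          refine tsum_congr fun c => ?_
          unfold chainWt
          ring
      _ = lam * ∑' c : Fin (k+1) → ZooIdx d, chainWt ν u y c := ENNReal.tsum_mul_left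
      _ ≤ lam * ((u * M) * lam^k) := mul_le_mul_right IH _
      _ = (u * M) * lam^(k+1) := by ring

end PZ
namespace PZ

variable {d : ℕ} {Ω : Type*} [MeasurableSpace Ω]

open scoped Classical in
lemma key (P : Measure Ω) [IsProbabilityMeasure P]
    (ν : Animal d → ℝ≥0∞) (hν : ∑' H : Animal d, ν H = 1)
    (N : ZooIdx d → Ω → ℕ) (hNmeas : ∀ p, Measurable (N p))
    (hindep : ProbabilityTheory.iIndepFun N P)
    (v : ℝ) (hv : 0 < v)
    (hpois : ∀ p k, P {ω | N p ω = k} = poissonProb (v * (ν p.2).toReal) k)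
    (M : ℝ≥0∞) (hM : (∑' H : Animal d, (H.1.card : ℝ≥0∞)^2 * ν H) = M)
    (y : Zd d) :
    ∃ F : Ω → ℝ≥0∞, Measurable F ∧
      (∀ ω, ((cluster (zooTrace N ω) y).encard.toENNReal) ≤ F ω) ∧
      ∫⁻ ω, F ω ∂P ≤ ∑' k : ℕ, (ENNReal.ofReal v * M)
        * ((((2*d+1 : ℕ)) : ℝ≥0∞) * M * ENNReal.ofReal v)^k := by
  set u : ℝ≥0∞ := ENNReal.ofReal v with hu
  -- sets and weights indexed by chains
  set E : (Σ k : ℕ, Fin (k+1) → ZooIdx d) → Set Ω :=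
    fun σ => {ω | ∀ i, 1 ≤ N (σ.2 i) ω} with hE
  have hEmeas : ∀ σ, MeasurableSet (E σ) := by
    intro σ
    have : E σ = ⋂ i, (N (σ.2 i)) ⁻¹' (Set.Ici 1) := by
      ext ω; simp [hE, Set.mem_iInter]
    rw [this]
    exact MeasurableSet.iInter fun i => (hNmeas _) MeasurableSet.of_discrete
  set cst : (Σ k : ℕ, Fin (k+1) → ZooIdx d) → ℝ≥0∞ :=
    fun σ => if FChainOK y σ.2 ∧ Function.Injective σ.2
      then ((σ.2 (Fin.last σ.1)).2.1.card : ℝ≥0∞) else 0 with hcst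
  set f : (Σ k : ℕ, Fin (k+1) → ZooIdx d) → Ω → ℝ≥0∞ :=
    fun σ ω => cst σ * Set.indicator (E σ) 1 ω with hf
  have hfmeas : ∀ σ, Measurable (f σ) :=
    fun σ => (measurable_one.indicator (hEmeas σ)).const_mul _
  refine ⟨fun ω => ∑' σ, f σ ω, Measurable.ennreal_tsum hfmeas, ?_, ?_⟩
  · -- pointwise bound
    intro ω
    set S := zooTrace N ω with hS
    have h1 : ((cluster S y).encard.toENNReal)
        = ∑' z : Zd d, Set.indicator (cluster S y) 1 z := by
      rw [← tsum_subtype (cluster S y) (1 : Zd d → ℝ≥0∞)]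
      exact (ENNReal.tsum_set_one (cluster S y)).symm
    rw [h1]
    have h2 : ∀ z : Zd d, Set.indicator (cluster S y) (1 : Zd d → ℝ≥0∞) z
        ≤ ∑' σ : (Σ k : ℕ, Fin (k+1) → ZooIdx d),
            (if FChainOK y σ.2 ∧ Function.Injective σ.2 then 1 else 0)
            * Set.indicator (E σ) 1 ω
            * (if z - (σ.2 (Fin.last σ.1)).1 ∈ (σ.2 (Fin.last σ.1)).2.1 then 1 else 0) := by
      intro z
      by_cases hz : z ∈ cluster S y
      · obtain ⟨k, c, hok, hinj, hpres, hendz⟩ := chain_fin_exists N ω y z hz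
        rw [Set.indicator_of_mem hz]
        refine le_trans ?_ (ENNReal.le_tsum (⟨k, c⟩ : Σ k : ℕ, Fin (k+1) → ZooIdx d))
        rw [if_pos ⟨hok, hinj⟩, Set.indicator_of_mem (by exact hpres), if_pos hendz]
        simp
      · rw [Set.indicator_of_notMem hz]; exact zero_le
    calc (∑' z : Zd d, Set.indicator (cluster S y) 1 z)
        ≤ ∑' z : Zd d, ∑' σ : (Σ k : ℕ, Fin (k+1) → ZooIdx d),
            (if FChainOK y σ.2 ∧ Function.Injective σ.2 then 1 else 0)
            * Set.indicator (E σ) 1 ω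
            * (if z - (σ.2 (Fin.last σ.1)).1 ∈ (σ.2 (Fin.last σ.1)).2.1 then 1 else 0) :=
          ENNReal.tsum_le_tsum h2
      _ = ∑' σ : (Σ k : ℕ, Fin (k+1) → ZooIdx d), ∑' z : Zd d,
            (if FChainOK y σ.2 ∧ Function.Injective σ.2 then 1 else 0)
            * Set.indicator (E σ) 1 ω
            * (if z - (σ.2 (Fin.last σ.1)).1 ∈ (σ.2 (Fin.last σ.1)).2.1 then 1 else 0) :=
          ENNReal.tsum_comm
      _ ≤ ∑' σ, f σ ω := by
          refine ENNReal.tsum_le_tsum fun σ => ?_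
          have hin : ∀ z : Zd d,
              (if z - (σ.2 (Fin.last σ.1)).1 ∈ (σ.2 (Fin.last σ.1)).2.1 then 1 else 0)
                ≤ (1 : ℝ≥0∞) := by
            intro z; split <;> simp
          calc (∑' z : Zd d, ((if FChainOK y σ.2 ∧ Function.Injective σ.2 then 1 else 0)
                  * Set.indicator (E σ) 1 ω)
                  * (if z - (σ.2 (Fin.last σ.1)).1 ∈ (σ.2 (Fin.last σ.1)).2.1 then 1 else 0))
              = ((if FChainOK y σ.2 ∧ Function.Injective σ.2 then 1 else 0)
                  * Set.indicator (E σ) 1 ω)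
                * ∑' z : Zd d,
                  (if z - (σ.2 (Fin.last σ.1)).1 ∈ (σ.2 (Fin.last σ.1)).2.1 then 1 else 0) :=
                ENNReal.tsum_mul_left
            _ ≤ ((if FChainOK y σ.2 ∧ Function.Injective σ.2 then 1 else 0)
                  * Set.indicator (E σ) 1 ω)
                * (((σ.2 (Fin.last σ.1)).2.1.card : ℝ≥0∞) * 1) := by
                refine mul_le_mul_right ?_ _
                refine le_trans (tsum_if_le (Finset.image
                  (fun h => (σ.2 (Fin.last σ.1)).1 + h) (σ.2 (Fin.last σ.1)).2.1) _ _ ?_) ?_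
                · intro z hzm
                  refine Finset.mem_image.mpr ⟨z - (σ.2 (Fin.last σ.1)).1, hzm, ?_⟩
                  show (σ.2 (Fin.last σ.1)).1 + (z - (σ.2 (Fin.last σ.1)).1) = z
                  abel
                · exact mul_le_mul_left
                    (by exact_mod_cast Nat.cast_le.mpr Finset.card_image_le) _
            _ = f σ ω := by
                simp only [hf, hcst]
                by_cases hc : FChainOK y σ.2 ∧ Function.Injective σ.2
                · rw [if_pos hc, if_pos hc]; ring
                · rw [if_neg hc, if_neg hc]; ring
  · -- integral bound
    rw [lintegral_tsum (fun σ => (hfmeas σ).aemeasurable)]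
    have hint : ∀ σ : (Σ k : ℕ, Fin (k+1) → ZooIdx d),
        (∫⁻ ω, f σ ω ∂P) ≤ chainWt ν u y σ.2 := by
      intro σ
      have : (∫⁻ ω, f σ ω ∂P) = cst σ * P (E σ) := by
        rw [hf]
        simp only
        rw [lintegral_const_mul _ (measurable_one.indicator (hEmeas σ))]
        congr 1
        exact lintegral_indicator_one (hEmeas σ)
      rw [this]
      simp only [hcst]
      by_cases hc : FChainOK y σ.2 ∧ Function.Injective σ.2
      · rw [if_pos hc]
        have hP : P (E σ) ≤ ∏ i, (u * ν (σ.2 i).2) :=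
          prod_bound P ν hν N hNmeas hindep v hv hpois σ.2 hc.2
        calc ((σ.2 (Fin.last σ.1)).2.1.card : ℝ≥0∞) * P (E σ)
            ≤ ((σ.2 (Fin.last σ.1)).2.1.card : ℝ≥0∞) * ∏ i, (u * ν (σ.2 i).2) :=
              mul_le_mul_right hP _
          _ = chainWt ν u y σ.2 := by
              unfold chainWt
              rw [if_pos hc.1]
              ring
      · rw [if_neg hc, zero_mul]; exact zero_le
    refine le_trans (ENNReal.tsum_le_tsum hint) ?_
    rw [ENNReal.tsum_sigma' (β := fun k : ℕ => Fin (k+1) → ZooIdx d)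
      (fun σ => chainWt ν u y σ.2)]
    exact ENNReal.tsum_le_tsum fun k => chain_sum_bound ν u M hM y k

end PZ
theorem poisson_zoo_finite_second_moment_subcritical {d : ℕ}
    {Ω : Type*} [MeasurableSpace Ω] (P : Measure Ω) [IsProbabilityMeasure P]
    (ν : Animal d → ℝ≥0∞) (hν : ∑' H : Animal d, ν H = 1)
    (N : Zd d × Animal d → Ω → ℕ) (hNmeas : ∀ p, Measurable (N p))
    (hindep : ProbabilityTheory.iIndepFun N P)
    (v : ℝ) (hv : 0 < v)
    (hpois : ∀ p k, P {ω | N p ω = k} = poissonProb (v * (ν p.2).toReal) k)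
    (m2 : ℝ≥0∞) (hm2 : m2 = ∑' H : Animal d, (H.1.card : ℝ≥0∞) ^ 2 * ν H) (hm2fin : m2 ≠ ⊤)
    (hvsmall : ENNReal.ofReal v < (((2 * d + 1 : ℕ) : ℝ≥0∞) * m2)⁻¹) :
    (∫⁻ ω, ((cluster (zooTrace N ω) 0).encard).toENNReal ∂P) ≠ ⊤ ∧
    ∀ᵐ ω ∂P, ¬ PercSet (zooTrace N ω) := by
  classical
  have hM : (∑' H : Animal d, (H.1.card : ℝ≥0∞)^2 * ν H) = m2 := hm2.symm
  have hlam1 : (((2*d+1 : ℕ)) : ℝ≥0∞) * m2 * ENNReal.ofReal v < 1 := by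
    by_cases hx0 : (((2 * d + 1 : ℕ)) : ℝ≥0∞) * m2 = 0
    · rw [hx0, zero_mul]; exact zero_lt_one
    · have hxtop : (((2 * d + 1 : ℕ)) : ℝ≥0∞) * m2 ≠ ⊤ :=
        ENNReal.mul_ne_top (ENNReal.natCast_ne_top _) hm2fin
      calc (((2*d+1 : ℕ)) : ℝ≥0∞) * m2 * ENNReal.ofReal v
          < (((2*d+1 : ℕ)) : ℝ≥0∞) * m2 * ((((2 * d + 1 : ℕ)) : ℝ≥0∞) * m2)⁻¹ :=
            (ENNReal.mul_lt_mul_iff_right hx0 hxtop).mpr hvsmall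
        _ = 1 := ENNReal.mul_inv_cancel hx0 hxtop
  have htot : (∑' k : ℕ, (ENNReal.ofReal v * m2)
      * ((((2*d+1 : ℕ)) : ℝ≥0∞) * m2 * ENNReal.ofReal v)^k) ≠ ⊤ := by
    rw [ENNReal.tsum_mul_left, ENNReal.tsum_geometric]
    refine ENNReal.mul_ne_top (ENNReal.mul_ne_top ENNReal.ofReal_ne_top hm2fin) ?_
    rw [Ne, ENNReal.inv_eq_top]
    intro h0
    rw [tsub_eq_zero_iff_le] at h0
    exact absurd hlam1 (not_lt.mpr h0)
  have hkey := fun y : Zd d =>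
    PZ.key P ν hν N hNmeas hindep v hv hpois m2 hM y
  constructor
  · obtain ⟨F, hFmeas, hFle, hFint⟩ := hkey 0
    have h1 : (∫⁻ ω, ((cluster (zooTrace N ω) 0).encard).toENNReal ∂P) ≤ ∫⁻ ω, F ω ∂P :=
      lintegral_mono hFle
    exact ne_top_of_le_ne_top (ne_top_of_le_ne_top htot hFint) h1
  · have hfin : ∀ y : Zd d, ∀ᵐ ω ∂P, (cluster (zooTrace N ω) y).Finite := by
      intro y
      obtain ⟨F, hFmeas, hFle, hFint⟩ := hkey y
      have hae := ae_lt_top hFmeas (ne_top_of_le_ne_top htot hFint)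
      filter_upwards [hae] with ω hω
      have h2 : ((cluster (zooTrace N ω) y).encard).toENNReal < ⊤ :=
        lt_of_le_of_lt (hFle ω) hω
      rw [← Set.encard_ne_top_iff]
      intro hc
      rw [hc] at h2
      simp at h2
    have hall := (MeasureTheory.ae_all_iff).mpr hfin
    filter_upwards [hall] with ω hω
    rintro ⟨x, hxS, hinf⟩
    have hx : {y | ConnIn (zooTrace N ω) x y} = cluster (zooTrace N ω) x := by
      ext z; simp [cluster, hxS]
    exact hinf (hx ▸ hω x)

end
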